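/- Let L ≥ 2 and write ⊥ = L−1. For every t_msp ∈ (0,1) and every t_osc ∈ (0,1), there exists a probability vector q : Fin L → ℝ≥0 (Σ_y q(y) = 1) with q(⊥) < 1 such that the Bayes-optimal open-set rejection decision disagrees with the MSP rejection decision: exactly one of the conditions [q(⊥) > t_osc] and [max_{y ≠ ⊥} q(y)/(1 − q(⊥)) < t_msp] holds. -/

import Mathlib

open Finset

/-- Lemma 3.4, failure of the MSP baseline: for every MSP threshold
`t_msp ∈ (0,1)` and Bayes threshold `t_osc ∈ (0,1)`, there is a probability vector `q`
on `Fin L` (with unseen class `⊥ = L − 1` and `q(⊥) < 1`) on which the Bayes-optimal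
open-set rejection decision `q(⊥) > t_osc` disagrees with the MSP rejection decision
`max_{y ≠ ⊥} q(y)/(1 − q(⊥)) < t_msp`: exactly one of the two holds. -/
theorem msp_disagrees_with_bayes_open_set
    {L : ℕ} (hL : 2 ≤ L) (bot : Fin L) (hbot : (bot : ℕ) = L - 1)
    (hne : (Finset.univ.erase bot).Nonempty)
    (tmsp tosc : ℝ) (htmsp0 : 0 < tmsp) (htmsp1 : tmsp < 1)
    (htosc0 : 0 < tosc) (htosc1 : tosc < 1) :
    ∃ q : Fin L → ℝ, (∀ y, 0 ≤ q y) ∧ (∑ y, q y = 1) ∧ q bot < 1 ∧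
      Xor' (q bot > tosc)
        ((Finset.univ.erase bot).sup' hne q / (1 - q bot) < tmsp) := by
  obtain ⟨y0, hy0⟩ := id hne
  have hy0bot : y0 ≠ bot := Finset.ne_of_mem_erase hy0
  set c : ℝ := (tosc + 1) / 2 with hc
  have hc1 : c < 1 := by rw [hc]; linarith
  have hc0 : 0 < c := by rw [hc]; linarith
  have hctosc : tosc < c := by rw [hc]; linarith
  refine ⟨fun y => if y = bot then c else if y = y0 then 1 - c else 0, ?_, ?_, ?_, ?_⟩
  · intro y
    dsimp only
    by_cases h1 : y = bot
    · rw [if_pos h1]; linarith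
    · by_cases h2 : y = y0
      · rw [if_neg h1, if_pos h2]; linarith
      · rw [if_neg h1, if_neg h2]
  · have hsum : (∑ y ∈ Finset.univ.erase bot,
        (if y = bot then c else if y = y0 then 1 - c else 0)) = 1 - c := by
      have h : ∀ y ∈ Finset.univ.erase bot,
          (if y = bot then c else if y = y0 then 1 - c else 0)
            = (if y = y0 then 1 - c else 0) := by
        intro y hy
        rw [if_neg (Finset.ne_of_mem_erase hy)]
      rw [Finset.sum_congr rfl h, Finset.sum_ite_eq' _ y0, if_pos hy0]
    rw [← Finset.add_sum_erase _ _ (Finset.mem_univ bot), if_pos rfl, hsum]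
    ring
  · simpa using hc1
  · have hsup : (Finset.univ.erase bot).sup'
        hne (fun y => if y = bot then c else if y = y0 then 1 - c else 0) = 1 - c := by
      apply le_antisymm
      · apply Finset.sup'_le
        intro y hy
        rw [if_neg (Finset.ne_of_mem_erase hy)]
        by_cases h2 : y = y0
        · rw [if_pos h2]
        · rw [if_neg h2]; linarith
      · have := Finset.le_sup' (f := fun y => if y = bot then c else if y = y0 then 1 - c else 0)
          hy0
        exact le_trans (le_of_eq (by simp [hy0bot])) this
    left
    refine ⟨by simpa using hctosc, ?_⟩
    intro hlt
    simp only [hsup, eq_self_iff_true, if_true, ite_true] at hlt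
    rw [div_self (by linarith : (1:ℝ) - c ≠ 0)] at hlt
    linarith
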